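/- Let k₁ ≠ ±k₂ be nonzero real numbers with k₁^3 + k₂^3 ≠ 0, η_j = (1/2)(k_j x - k_j^5 t - c_j), b₀ = sqrt( ((k₁+k₂)^3 (k₁^2 + k₁k₂ + k₂^2)) / ((k₁^3+k₂^3)(k₁-k₂)^2) ), b₁ = ((k₁+k₂)^3/(k₁^3+k₂^3))(k₁^2+k₂^2). Then u(x,t) = 3[ b₁ + k₂^2 b₀ cosh(2η₁) + k₁^2 b₀ cosh(2η₂) ] / [ cosh(η₁+η₂) + b₀ cosh(η₁-η₂) ]^2 satisfies the Sawada–Kotera equation u_t + u_xxxxx + 5 u u_xxx + 5 u_x u_xx + 5 u^2 u_x = 0. -/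

import Mathlib

/-- Partial derivative in the first (spatial) variable. -/
noncomputable def dx (u : ℝ → ℝ → ℝ) : ℝ → ℝ → ℝ := fun x t => deriv (fun y => u y t) x

/-- Partial derivative in the second (temporal) variable. -/
noncomputable def dt (u : ℝ → ℝ → ℝ) : ℝ → ℝ → ℝ := fun x t => deriv (fun s => u x s) t

private lemma hEx (a b c t x : ℝ) :
    HasDerivAt (fun y : ℝ => Real.exp (a*y - b*t - c)) (a * Real.exp (a*x - b*t - c)) x := by
  have h : HasDerivAt (fun y : ℝ => a*y - b*t - c) a x := by
    simpa using (((hasDerivAt_id x).const_mul a).sub_const (b*t)).sub_const c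
  simpa [mul_comm] using h.exp

private lemma hEt (a b c x t : ℝ) :
    HasDerivAt (fun s : ℝ => Real.exp (a*x - b*s - c)) (-b * Real.exp (a*x - b*t - c)) t := by
  have h : HasDerivAt (fun s : ℝ => a*x - b*s - c) (-b) t := by
    simpa using ((((hasDerivAt_id t).const_mul b).const_sub (a*x))).sub_const c
  simpa [mul_comm] using h.exp



set_option maxHeartbeats 2000000 in
/-- The 2-soliton solution of the Sawada–Kotera equation: with
`η_j = (1/2)(k_j x - k_j⁵ t - c_j)`,
`b₀ = √(((k₁+k₂)³ (k₁²+k₁k₂+k₂²)) / ((k₁³+k₂³)(k₁-k₂)²))` and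
`b₁ = ((k₁+k₂)³/(k₁³+k₂³)) (k₁²+k₂²)`, the function
`u = 3[b₁ + k₂² b₀ cosh(2η₁) + k₁² b₀ cosh(2η₂)] / [cosh(η₁+η₂) + b₀ cosh(η₁-η₂)]²`
satisfies `u_t + u_xxxxx + 5 u u_xxx + 5 u_x u_xx + 5 u² u_x = 0`. -/
theorem two_soliton_solves_SK (k₁ k₂ c₁ c₂ b₀ b₁ : ℝ)
    (hk₁ : k₁ ≠ 0) (hk₂ : k₂ ≠ 0) (hne : k₁ ≠ k₂) (hne' : k₁ ≠ -k₂)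
    (hsum : k₁^3 + k₂^3 ≠ 0)
    (η₁ η₂ : ℝ → ℝ → ℝ)
    (hη₁ : η₁ = fun x t => (1/2) * (k₁*x - k₁^5*t - c₁))
    (hη₂ : η₂ = fun x t => (1/2) * (k₂*x - k₂^5*t - c₂))
    (hb₀ : b₀ = Real.sqrt (((k₁+k₂)^3 * (k₁^2 + k₁*k₂ + k₂^2)) / ((k₁^3+k₂^3) * (k₁-k₂)^2)))
    (hb₁ : b₁ = ((k₁+k₂)^3 / (k₁^3+k₂^3)) * (k₁^2+k₂^2))
    (hden : ∀ x t, Real.cosh (η₁ x t + η₂ x t) + b₀ * Real.cosh (η₁ x t - η₂ x t) ≠ 0)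
    (u : ℝ → ℝ → ℝ)
    (hu : u = fun x t =>
      3 * (b₁ + k₂^2 * b₀ * Real.cosh (2 * η₁ x t) + k₁^2 * b₀ * Real.cosh (2 * η₂ x t))
        / (Real.cosh (η₁ x t + η₂ x t) + b₀ * Real.cosh (η₁ x t - η₂ x t))^2) :
    ∀ x t,
      dt u x t + dx (dx (dx (dx (dx u)))) x t + 5 * u x t * dx (dx (dx u)) x t
        + 5 * dx u x t * dx (dx u) x t + 5 * (u x t)^2 * dx u x t = 0 := by
  -- basic nonzero facts
  have hk12 : k₁ + k₂ ≠ 0 := fun h => hne' (by linarith)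
  have hkd : k₁ - k₂ ≠ 0 := sub_ne_zero.mpr hne
  have hk1sq : (0:ℝ) < k₁^2 := by positivity
  have hq2 : (0:ℝ) < k₁^2 - k₁*k₂ + k₂^2 := by nlinarith [sq_nonneg (k₁-k₂), sq_nonneg k₂]
  have hq2' : (0:ℝ) < k₁^2 + k₁*k₂ + k₂^2 := by nlinarith [sq_nonneg (k₁+k₂), sq_nonneg k₂]
  have hdd : (k₁^2 - k₁*k₂ + k₂^2)*(k₁-k₂)^2 ≠ 0 :=
    mul_ne_zero (ne_of_gt hq2) (pow_ne_zero 2 hkd)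
  have hb0sq : b₀^2 * ((k₁^2 - k₁*k₂ + k₂^2)*(k₁-k₂)^2) = (k₁+k₂)^2*(k₁^2+k₁*k₂+k₂^2) := by
    have harg : ((k₁+k₂)^3 * (k₁^2 + k₁*k₂ + k₂^2)) / ((k₁^3+k₂^3) * (k₁-k₂)^2)
        = ((k₁+k₂)^2*(k₁^2+k₁*k₂+k₂^2)) / ((k₁^2 - k₁*k₂ + k₂^2)*(k₁-k₂)^2) := by
      rw [div_eq_div_iff (mul_ne_zero hsum (pow_ne_zero 2 hkd)) hdd]; ring
    have hnn : 0 ≤ ((k₁+k₂)^2*(k₁^2+k₁*k₂+k₂^2)) / ((k₁^2 - k₁*k₂ + k₂^2)*(k₁-k₂)^2) :=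
      div_nonneg (by positivity) (le_of_lt (by positivity))
    rw [hb₀, harg, Real.sq_sqrt hnn, div_mul_cancel₀ _ hdd]
  have hb1c : b₁ * (k₁^3+k₂^3) = (k₁+k₂)^3*(k₁^2+k₂^2) := by
    rw [hb₁]; field_simp
  clear hb₀ hb₁
  -- tau function and its derivatives
  obtain ⟨Tt, hTt⟩ : ∃ T : ℝ → ℝ → ℝ, T = fun x t =>
    Real.exp ((k₁+k₂)*x - (k₁^5+k₂^5)*t - (c₁+c₂)) + b₀ * Real.exp (k₁*x - k₁^5*t - c₁)
      + b₀ * Real.exp (k₂*x - k₂^5*t - c₂) + 1 := ⟨_, rfl⟩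
  obtain ⟨Q, hQd⟩ : ∃ Qf : ℕ → ℝ → ℝ → ℝ, Qf = fun n x t =>
    (k₁+k₂)^n * Real.exp ((k₁+k₂)*x - (k₁^5+k₂^5)*t - (c₁+c₂))
      + b₀*k₁^n * Real.exp (k₁*x - k₁^5*t - c₁) + b₀*k₂^n * Real.exp (k₂*x - k₂^5*t - c₂) := ⟨_, rfl⟩
  obtain ⟨Rr, hRd⟩ : ∃ Rf : ℕ → ℝ → ℝ → ℝ, Rf = fun n x t =>
    -((k₁^5+k₂^5)*(k₁+k₂)^n * Real.exp ((k₁+k₂)*x - (k₁^5+k₂^5)*t - (c₁+c₂))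
      + b₀*k₁^(5+n) * Real.exp (k₁*x - k₁^5*t - c₁)
      + b₀*k₂^(5+n) * Real.exp (k₂*x - k₂^5*t - c₂)) := ⟨_, rfl⟩
  have hTd : ∀ x t : ℝ, HasDerivAt (fun y => Tt y t) (Q 1 x t) x := by
    intro x t
    have h := (((hEx (k₁+k₂) (k₁^5+k₂^5) (c₁+c₂) t x).add
      ((hEx k₁ (k₁^5) c₁ t x).const_mul b₀)).add
      ((hEx k₂ (k₂^5) c₂ t x).const_mul b₀)).add_const (1:ℝ)
    simp only [hTt, hQd]
    refine h.congr_deriv ?_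
    ring
  have hQx : ∀ (n : ℕ) (x t : ℝ), HasDerivAt (fun y => Q n y t) (Q (n+1) x t) x := by
    intro n x t
    have h := (((hEx (k₁+k₂) (k₁^5+k₂^5) (c₁+c₂) t x).const_mul ((k₁+k₂)^n)).add
      ((hEx k₁ (k₁^5) c₁ t x).const_mul (b₀*k₁^n))).add
      ((hEx k₂ (k₂^5) c₂ t x).const_mul (b₀*k₂^n))
    simp only [hQd]
    refine h.congr_deriv ?_
    ring
  have hTtd : ∀ x t : ℝ, HasDerivAt (fun s => Tt x s) (Rr 0 x t) t := by
    intro x t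
    have h := (((hEt (k₁+k₂) (k₁^5+k₂^5) (c₁+c₂) x t).add
      ((hEt k₁ (k₁^5) c₁ x t).const_mul b₀)).add
      ((hEt k₂ (k₂^5) c₂ x t).const_mul b₀)).add_const (1:ℝ)
    simp only [hTt, hRd]
    refine h.congr_deriv ?_
    ring
  have hQtd : ∀ (n : ℕ) (x t : ℝ), HasDerivAt (fun s => Q n x s) (Rr n x t) t := by
    intro n x t
    have h := (((hEt (k₁+k₂) (k₁^5+k₂^5) (c₁+c₂) x t).const_mul ((k₁+k₂)^n)).add
      ((hEt k₁ (k₁^5) c₁ x t).const_mul (b₀*k₁^n))).add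
      ((hEt k₂ (k₂^5) c₂ x t).const_mul (b₀*k₂^n))
    simp only [hQd, hRd]
    refine h.congr_deriv ?_
    ring
  have hTkey : ∀ x t : ℝ, Tt x t = 2 * Real.exp (η₁ x t + η₂ x t) *
      (Real.cosh (η₁ x t + η₂ x t) + b₀ * Real.cosh (η₁ x t - η₂ x t)) := by
    intro x t
    have e1 : Real.exp (η₁ x t + η₂ x t) * Real.exp (η₁ x t + η₂ x t)
        = Real.exp ((k₁+k₂)*x - (k₁^5+k₂^5)*t - (c₁+c₂)) := by
      rw [← Real.exp_add]; congr 1; simp only [hη₁, hη₂]; ring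
    have e0 : Real.exp (η₁ x t + η₂ x t) * Real.exp (-(η₁ x t + η₂ x t)) = 1 := by
      rw [← Real.exp_add, show η₁ x t + η₂ x t + -(η₁ x t + η₂ x t) = (0:ℝ) from by ring,
        Real.exp_zero]
    have e2 : Real.exp (η₁ x t + η₂ x t) * Real.exp (η₁ x t - η₂ x t)
        = Real.exp (k₁*x - k₁^5*t - c₁) := by
      rw [← Real.exp_add]; congr 1; simp only [hη₁, hη₂]; ring
    have e3 : Real.exp (η₁ x t + η₂ x t) * Real.exp (-(η₁ x t - η₂ x t))
        = Real.exp (k₂*x - k₂^5*t - c₂) := by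
      rw [← Real.exp_add]; congr 1; simp only [hη₁, hη₂]; ring
    simp only [hTt, Real.cosh_eq]
    linear_combination -e1 - e0 - b₀*e2 - b₀*e3
  have hTne : ∀ x t : ℝ, Tt x t ≠ 0 := by
    intro x t
    rw [hTkey x t]
    exact mul_ne_zero (mul_ne_zero two_ne_zero (Real.exp_ne_zero _)) (hden x t)
  have hu0 : u = fun x t =>
      ((6:ℝ) * (Tt x t * Q 2 x t) + (-6:ℝ) * (Q 1 x t * Q 1 x t)) / (Tt x t)^2 := by
    rw [hu]
    funext x t
    have hy : Real.exp (η₁ x t) ≠ 0 := Real.exp_ne_zero _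
    have hz : Real.exp (η₂ x t) ≠ 0 := Real.exp_ne_zero _
    have hY : Real.exp (k₁*x - k₁^5*t - c₁) = Real.exp (η₁ x t) ^ 2 := by
      rw [sq, ← Real.exp_add]; congr 1; simp only [hη₁]; ring
    have hZ : Real.exp (k₂*x - k₂^5*t - c₂) = Real.exp (η₂ x t) ^ 2 := by
      rw [sq, ← Real.exp_add]; congr 1; simp only [hη₂]; ring
    have hX : Real.exp ((k₁+k₂)*x - (k₁^5+k₂^5)*t - (c₁+c₂))
        = Real.exp (η₁ x t) ^ 2 * Real.exp (η₂ x t) ^ 2 := by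
      rw [sq, sq, ← Real.exp_add, ← Real.exp_add, ← Real.exp_add]; congr 1
      simp only [hη₁, hη₂]; ring
    have hY2 : Real.exp (2 * η₁ x t) = Real.exp (η₁ x t) ^ 2 := by
      rw [sq, ← Real.exp_add]; congr 1; ring
    have hZ2 : Real.exp (2 * η₂ x t) = Real.exp (η₂ x t) ^ 2 := by
      rw [sq, ← Real.exp_add]; congr 1; ring
    have hS : Real.exp (η₁ x t + η₂ x t) = Real.exp (η₁ x t) * Real.exp (η₂ x t) :=
      Real.exp_add _ _
    have hD : Real.exp (η₁ x t - η₂ x t) = Real.exp (η₁ x t) / Real.exp (η₂ x t) :=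
      Real.exp_sub _ _
    rw [div_eq_div_iff (pow_ne_zero 2 (hden x t)) (pow_ne_zero 2 (hTne x t))]
    simp only [hTt, hQd, Real.cosh_eq, Real.exp_neg, hX, hY, hZ, hY2, hZ2, hS, hD]
    field_simp
    apply mul_left_cancel₀ hsum
    linear_combination (12 * (Real.exp (η₁ x t) ^ 2 * (Real.exp (η₂ x t) ^ 2 + b₀) + b₀ * Real.exp (η₂ x t) ^ 2 + 1)^2 * Real.exp (η₁ x t) ^ 2 * Real.exp (η₂ x t) ^ 2) * hb1c + (-6 * (Real.exp (η₁ x t) ^ 2 * (Real.exp (η₂ x t) ^ 2 + b₀) + b₀ * Real.exp (η₂ x t) ^ 2 + 1)^2 * Real.exp (η₁ x t) ^ 2 * Real.exp (η₂ x t) ^ 2 * (k₁+k₂)) * hb0sq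
  have hU1 : dx u = fun x t => ((6:ℝ) * (Tt x t * Tt x t * Q 3 x t) + (-18:ℝ) * (Tt x t * Q 1 x t * Q 2 x t) + (12:ℝ) * (Q 1 x t * Q 1 x t * Q 1 x t)) / Tt x t ^ 3 := by
    rw [hu0]
    funext x t
    simp only [dx]
    have hT : HasDerivAt (fun y => Tt y t) (Q 1 x t) x := hTd x t
    have hQ1 : HasDerivAt (fun y => Q 1 y t) (Q 2 x t) x := by simpa using hQx 1 x t
    have hQ2 : HasDerivAt (fun y => Q 2 y t) (Q 3 x t) x := by simpa using hQx 2 x t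
    have hN := (((hT.mul hQ2).const_mul (6:ℝ)).add ((hQ1.mul hQ1).const_mul (-6:ℝ)))
    have h := hN.div (hT.pow 2) (pow_ne_zero 2 (hTne x t))
    erw [h.deriv]
    simp only [Pi.pow_apply, Pi.mul_apply, Pi.add_apply]
    have hτ := hTne x t
    field_simp
    ring
  have hU2 : dx (fun x t => ((6:ℝ) * (Tt x t * Tt x t * Q 3 x t) + (-18:ℝ) * (Tt x t * Q 1 x t * Q 2 x t) + (12:ℝ) * (Q 1 x t * Q 1 x t * Q 1 x t)) / Tt x t ^ 3) = fun x t => ((6:ℝ) * (Tt x t * Tt x t * Tt x t * Q 4 x t) + (-24:ℝ) * (Tt x t * Tt x t * Q 1 x t * Q 3 x t) + (-18:ℝ) * (Tt x t * Tt x t * Q 2 x t * Q 2 x t) + (72:ℝ) * (Tt x t * Q 1 x t * Q 1 x t * Q 2 x t) + (-36:ℝ) * (Q 1 x t * Q 1 x t * Q 1 x t * Q 1 x t)) / Tt x t ^ 4 := by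
    funext x t
    simp only [dx]
    have hT : HasDerivAt (fun y => Tt y t) (Q 1 x t) x := hTd x t
    have hQ1 : HasDerivAt (fun y => Q 1 y t) (Q 2 x t) x := by simpa using hQx 1 x t
    have hQ2 : HasDerivAt (fun y => Q 2 y t) (Q 3 x t) x := by simpa using hQx 2 x t
    have hQ3 : HasDerivAt (fun y => Q 3 y t) (Q 4 x t) x := by simpa using hQx 3 x t
    have hN := (((((hT.mul hT).mul hQ3).const_mul (6:ℝ)).add (((hT.mul hQ1).mul hQ2).const_mul (-18:ℝ))).add (((hQ1.mul hQ1).mul hQ1).const_mul (12:ℝ)))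
    have h := hN.div (hT.pow 3) (pow_ne_zero 3 (hTne x t))
    erw [h.deriv]
    simp only [Pi.pow_apply, Pi.mul_apply, Pi.add_apply]
    have hτ := hTne x t
    field_simp
    ring
  have hU3 : dx (fun x t => ((6:ℝ) * (Tt x t * Tt x t * Tt x t * Q 4 x t) + (-24:ℝ) * (Tt x t * Tt x t * Q 1 x t * Q 3 x t) + (-18:ℝ) * (Tt x t * Tt x t * Q 2 x t * Q 2 x t) + (72:ℝ) * (Tt x t * Q 1 x t * Q 1 x t * Q 2 x t) + (-36:ℝ) * (Q 1 x t * Q 1 x t * Q 1 x t * Q 1 x t)) / Tt x t ^ 4) = fun x t => ((6:ℝ) * (Tt x t * Tt x t * Tt x t * Tt x t * Q 5 x t) + (-30:ℝ) * (Tt x t * Tt x t * Tt x t * Q 1 x t * Q 4 x t) + (-60:ℝ) * (Tt x t * Tt x t * Tt x t * Q 2 x t * Q 3 x t) + (120:ℝ) * (Tt x t * Tt x t * Q 1 x t * Q 1 x t * Q 3 x t) + (180:ℝ) * (Tt x t * Tt x t * Q 1 x t * Q 2 x t * Q 2 x t) + (-360:ℝ) * (Tt x t * Q 1 x t * Q 1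 x t * Q 1 x t * Q 2 x t) + (144:ℝ) * (Q 1 x t * Q 1 x t * Q 1 x t * Q 1 x t * Q 1 x t)) / Tt x t ^ 5 := by
    funext x t
    simp only [dx]
    have hT : HasDerivAt (fun y => Tt y t) (Q 1 x t) x := hTd x t
    have hQ1 : HasDerivAt (fun y => Q 1 y t) (Q 2 x t) x := by simpa using hQx 1 x t
    have hQ2 : HasDerivAt (fun y => Q 2 y t) (Q 3 x t) x := by simpa using hQx 2 x t
    have hQ3 : HasDerivAt (fun y => Q 3 y t) (Q 4 x t) x := by simpa using hQx 3 x t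
    have hQ4 : HasDerivAt (fun y => Q 4 y t) (Q 5 x t) x := by simpa using hQx 4 x t
    have hN := ((((((((hT.mul hT).mul hT).mul hQ4).const_mul (6:ℝ)).add ((((hT.mul hT).mul hQ1).mul hQ3).const_mul (-24:ℝ))).add ((((hT.mul hT).mul hQ2).mul hQ2).const_mul (-18:ℝ))).add ((((hT.mul hQ1).mul hQ1).mul hQ2).const_mul (72:ℝ))).add ((((hQ1.mul hQ1).mul hQ1).mul hQ1).const_mul (-36:ℝ)))
    have h := hN.div (hT.pow 4) (pow_ne_zero 4 (hTne x t))
    erw [h.deriv]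
    simp only [Pi.pow_apply, Pi.mul_apply, Pi.add_apply]
    have hτ := hTne x t
    field_simp
    ring
  have hU4 : dx (fun x t => ((6:ℝ) * (Tt x t * Tt x t * Tt x t * Tt x t * Q 5 x t) + (-30:ℝ) * (Tt x t * Tt x t * Tt x t * Q 1 x t * Q 4 x t) + (-60:ℝ) * (Tt x t * Tt x t * Tt x t * Q 2 x t * Q 3 x t) + (120:ℝ) * (Tt x t * Tt x t * Q 1 x t * Q 1 x t * Q 3 x t) + (180:ℝ) * (Tt x t * Tt x t * Q 1 x t * Q 2 x t * Q 2 x t) + (-360:ℝ) * (Tt x t * Q 1 x t * Q 1 x t * Q 1 x t * Q 2 x t) + (144:ℝ) * (Q 1 x t * Q 1 x t * Q 1 x t * Q 1 x t * Q 1 x t)) / Tt x t ^ 5) = fun x t => ((6:ℝ) * (Tt x t * Tt x t * Tt x t * Tt x t * Tt x t * Q 6 x t) + (-36:ℝ) * (Tt x t * Tt x t * Tt x t * Tt x t * Q 1 x t * Q 5 x t) + (-90:ℝ) * (Tt x t * Tt x t * Tt x t * Tt x t * Q 2 x t * Q 4 x t) + (-60:ℝ) * (Tt x t * Tt x t * Tt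 x t * Tt x t * Q 3 x t * Q 3 x t) + (180:ℝ) * (Tt x t * Tt x t * Tt x t * Q 1 x t * Q 1 x t * Q 4 x t) + (720:ℝ) * (Tt x t * Tt x t * Tt x t * Q 1 x t * Q 2 x t * Q 3 x t) + (180:ℝ) * (Tt x t * Tt x t * Tt x t * Q 2 x t * Q 2 x t * Q 2 x t) + (-720:ℝ) * (Tt x t * Tt x t * Q 1 x t * Q 1 x t * Q 1 x t * Q 3 x t) + (-1620:ℝ) * (Tt x t * Tt x t * Q 1 x t * Q 1 x t * Q 2 x t * Q 2 x t) + (2160:ℝ) * (Tt x t * Q 1 x t * Q 1 x t * Q 1 x t * Q 1 x t * Q 2 x t) + (-720:ℝ) * (Q 1 x t * Q 1 x t * Q 1 x t * Q 1 x t * Q 1 x t * Q 1 x t)) / Tt x t ^ 6 := by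
    funext x t
    simp only [dx]
    have hT : HasDerivAt (fun y => Tt y t) (Q 1 x t) x := hTd x t
    have hQ1 : HasDerivAt (fun y => Q 1 y t) (Q 2 x t) x := by simpa using hQx 1 x t
    have hQ2 : HasDerivAt (fun y => Q 2 y t) (Q 3 x t) x := by simpa using hQx 2 x t
    have hQ3 : HasDerivAt (fun y => Q 3 y t) (Q 4 x t) x := by simpa using hQx 3 x t
    have hQ4 : HasDerivAt (fun y => Q 4 y t) (Q 5 x t) x := by simpa using hQx 4 x t
    have hQ5 : HasDerivAt (fun y => Q 5 y t) (Q 6 x t) x := by simpa using hQx 5 x t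
    have hN := (((((((((((hT.mul hT).mul hT).mul hT).mul hQ5).const_mul (6:ℝ)).add (((((hT.mul hT).mul hT).mul hQ1).mul hQ4).const_mul (-30:ℝ))).add (((((hT.mul hT).mul hT).mul hQ2).mul hQ3).const_mul (-60:ℝ))).add (((((hT.mul hT).mul hQ1).mul hQ1).mul hQ3).const_mul (120:ℝ))).add (((((hT.mul hT).mul hQ1).mul hQ2).mul hQ2).const_mul (180:ℝ))).add (((((hT.mul hQ1).mul hQ1).mul hQ1).mul hQ2).const_mul (-360:ℝ))).add (((((hQ1.mul hQ1).mul hQ1).mul hQ1).mul hQ1).const_mul (144:ℝ)))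
    have h := hN.div (hT.pow 5) (pow_ne_zero 5 (hTne x t))
    erw [h.deriv]
    simp only [Pi.pow_apply, Pi.mul_apply, Pi.add_apply]
    have hτ := hTne x t
    field_simp
    ring
  have hU5 : dx (fun x t => ((6:ℝ) * (Tt x t * Tt x t * Tt x t * Tt x t * Tt x t * Q 6 x t) + (-36:ℝ) * (Tt x t * Tt x t * Tt x t * Tt x t * Q 1 x t * Q 5 x t) + (-90:ℝ) * (Tt x t * Tt x t * Tt x t * Tt x t * Q 2 x t * Q 4 x t) + (-60:ℝ) * (Tt x t * Tt x t * Tt x t * Tt x t * Q 3 x t * Q 3 x t) + (180:ℝ) * (Tt x t * Tt x t * Tt x t * Q 1 x t * Q 1 x t * Q 4 x t) + (720:ℝ) * (Tt x t * Tt x t * Tt x t * Q 1 x t * Q 2 x t * Q 3 x t) + (180:ℝ) * (Tt x t * Tt x t * Tt x t * Q 2 x t * Q 2 x t * Q 2 x t) + (-720:ℝ) * (Tt x t * Tt x t * Q 1 x t * Q 1 x t * Q 1 x t * Q 3 x t) + (-1620:ℝ) * (Tt x t * Tt x t * Q 1 x t * Q 1 x t * Q 2 x t * Q 2 x t) + (2160:ℝ)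 * (Tt x t * Q 1 x t * Q 1 x t * Q 1 x t * Q 1 x t * Q 2 x t) + (-720:ℝ) * (Q 1 x t * Q 1 x t * Q 1 x t * Q 1 x t * Q 1 x t * Q 1 x t)) / Tt x t ^ 6) = fun x t => ((6:ℝ) * (Tt x t * Tt x t * Tt x t * Tt x t * Tt x t * Tt x t * Q 7 x t) + (-42:ℝ) * (Tt x t * Tt x t * Tt x t * Tt x t * Tt x t * Q 1 x t * Q 6 x t) + (-126:ℝ) * (Tt x t * Tt x t * Tt x t * Tt x t * Tt x t * Q 2 x t * Q 5 x t) + (-210:ℝ) * (Tt x t * Tt x t * Tt x t * Tt x t * Tt x t * Q 3 x t * Q 4 x t) + (252:ℝ) * (Tt x t * Tt x t * Tt x t * Tt x t * Q 1 x t * Q 1 x t * Q 5 x t) + (1260:ℝ) * (Tt x t * Tt x t * Tt x t * Tt x t * Q 1 x t * Q 2 x t * Q 4 x t) + (840:ℝ) * (Tt x t * Tt x t * Tt x t * Tt x t * Q 1 x t * Q 3 x t * Q 3 x t) + (1260:ℝ) * (Tt x t * Tt x t * Tt x t * Tt x t * Q 2 x t * Q 2 x t * Q 3 x t) + (-1260:ℝ)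 * (Tt x t * Tt x t * Tt x t * Q 1 x t * Q 1 x t * Q 1 x t * Q 4 x t) + (-7560:ℝ) * (Tt x t * Tt x t * Tt x t * Q 1 x t * Q 1 x t * Q 2 x t * Q 3 x t) + (-3780:ℝ) * (Tt x t * Tt x t * Tt x t * Q 1 x t * Q 2 x t * Q 2 x t * Q 2 x t) + (5040:ℝ) * (Tt x t * Tt x t * Q 1 x t * Q 1 x t * Q 1 x t * Q 1 x t * Q 3 x t) + (15120:ℝ) * (Tt x t * Tt x t * Q 1 x t * Q 1 x t * Q 1 x t * Q 2 x t * Q 2 x t) + (-15120:ℝ) * (Tt x t * Q 1 x t * Q 1 x t * Q 1 x t * Q 1 x t * Q 1 x t * Q 2 x t) + (4320:ℝ) * (Q 1 x t * Q 1 x t * Q 1 x t * Q 1 x t * Q 1 x t * Q 1 x t * Q 1 x t)) / Tt x t ^ 7 := by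
    funext x t
    simp only [dx]
    have hT : HasDerivAt (fun y => Tt y t) (Q 1 x t) x := hTd x t
    have hQ1 : HasDerivAt (fun y => Q 1 y t) (Q 2 x t) x := by simpa using hQx 1 x t
    have hQ2 : HasDerivAt (fun y => Q 2 y t) (Q 3 x t) x := by simpa using hQx 2 x t
    have hQ3 : HasDerivAt (fun y => Q 3 y t) (Q 4 x t) x := by simpa using hQx 3 x t
    have hQ4 : HasDerivAt (fun y => Q 4 y t) (Q 5 x t) x := by simpa using hQx 4 x t
    have hQ5 : HasDerivAt (fun y => Q 5 y t) (Q 6 x t) x := by simpa using hQx 5 x t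
    have hQ6 : HasDerivAt (fun y => Q 6 y t) (Q 7 x t) x := by simpa using hQx 6 x t
    have hN := ((((((((((((((((hT.mul hT).mul hT).mul hT).mul hT).mul hQ6).const_mul (6:ℝ)).add ((((((hT.mul hT).mul hT).mul hT).mul hQ1).mul hQ5).const_mul (-36:ℝ))).add ((((((hT.mul hT).mul hT).mul hT).mul hQ2).mul hQ4).const_mul (-90:ℝ))).add ((((((hT.mul hT).mul hT).mul hT).mul hQ3).mul hQ3).const_mul (-60:ℝ))).add ((((((hT.mul hT).mul hT).mul hQ1).mul hQ1).mul hQ4).const_mul (180:ℝ))).add ((((((hT.mul hT).mul hT).mul hQ1).mul hQ2).mul hQ3).const_mul (720:ℝ))).add ((((((hT.mul hT).mul hT).mul hQ2).mul hQ2).mul hQ2).const_mul (180:ℝ))).add ((((((hT.mul hT).mul hQ1).mul hQ1).mul hQ1).mul hQ3).const_mul (-720:ℝ))).add ((((((hT.mul hT).mul hQ1).mul hQ1).mul hQ2).mul hQ2).const_mul (-1620:ℝ))).add ((((((hT.mul hQ1).mul hQ1).mul hQ1).mul hQ1).mul hQ2).const_mul (2160:ℝ))).add ((((((hQ1.mul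 hQ1).mul hQ1).mul hQ1).mul hQ1).mul hQ1).const_mul (-720:ℝ)))
    have h := hN.div (hT.pow 6) (pow_ne_zero 6 (hTne x t))
    erw [h.deriv]
    simp only [Pi.pow_apply, Pi.mul_apply, Pi.add_apply]
    have hτ := hTne x t
    field_simp
    ring
  have hUt : ∀ x t : ℝ, dt u x t = ((6:ℝ) * (Tt x t * Tt x t * Rr 2 x t) + (-12:ℝ) * (Tt x t * Q 1 x t * Rr 1 x t) + (-6:ℝ) * (Tt x t * Q 2 x t * Rr 0 x t) + (12:ℝ) * (Q 1 x t * Q 1 x t * Rr 0 x t)) / Tt x t ^ 3 := by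
    intro x t
    rw [hu0]
    simp only [dt]
    have hT : HasDerivAt (fun s => Tt x s) (Rr 0 x t) t := hTtd x t
    have hR1 : HasDerivAt (fun s => Q 1 x s) (Rr 1 x t) t := hQtd 1 x t
    have hR2 : HasDerivAt (fun s => Q 2 x s) (Rr 2 x t) t := hQtd 2 x t
    have hN := (((hT.mul hR2).const_mul (6:ℝ)).add (((hR1.mul hR1)).const_mul (-6:ℝ)))
    have h := hN.div (hT.pow 2) (pow_ne_zero 2 (hTne x t))
    erw [h.deriv]
    simp only [Pi.pow_apply, Pi.mul_apply, Pi.add_apply]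
    have hτ := hTne x t
    field_simp
    ring
  intro x t
  rw [hU1, hU2, hU3, hU4, hU5, hUt x t]
  simp only [hu0]
  have hτ := hTne x t
  have hX2 : Real.exp ((k₁+k₂)*x - (k₁^5+k₂^5)*t - (c₁+c₂))
      = Real.exp (k₁*x - k₁^5*t - c₁) * Real.exp (k₂*x - k₂^5*t - c₂) := by
    rw [← Real.exp_add]; congr 1; ring
  have hB : Tt x t * Q 6 x t - 6 * (Q 1 x t * Q 5 x t) + 15 * (Q 2 x t * Q 4 x t)
      - 10 * (Q 3 x t * Q 3 x t) + (Tt x t * Rr 1 x t - Q 1 x t * Rr 0 x t) = 0 := by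
    simp only [hTt, hQd, hRd, hX2]
    linear_combination (-5*k₁*k₂*(Real.exp (k₁*x - k₁^5*t - c₁))*(Real.exp (k₂*x - k₂^5*t - c₂))) * hb0sq
  have hBxs : ((k₁^2 - k₁*k₂ + k₂^2)*(k₁-k₂)^2) * (Tt x t * Q 7 x t - 5 * (Q 1 x t * Q 6 x t)
      + 9 * (Q 2 x t * Q 5 x t) - 5 * (Q 3 x t * Q 4 x t)
      + (Tt x t * Rr 2 x t - Q 2 x t * Rr 0 x t)) = 0 := by
    simp only [hTt, hQd, hRd, hX2]
    linear_combination ((-5*k₁*k₂*(k₁^5 - 2*k₁^4*k₂ + k₁^3*k₂^2 + k₁^2*k₂^3 - 2*k₁*k₂^4 + k₂^5))*(Real.exp (k₁*x - k₁^5*t - c₁))*(Real.exp (k₂*x - k₂^5*t - c₂))) * hb0sq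
  have hBx : Tt x t * Q 7 x t - 5 * (Q 1 x t * Q 6 x t)
      + 9 * (Q 2 x t * Q 5 x t) - 5 * (Q 3 x t * Q 4 x t)
      + (Tt x t * Rr 2 x t - Q 2 x t * Rr 0 x t) = 0 :=
    (mul_eq_zero.mp hBxs).resolve_left hdd
  field_simp
  linear_combination (6*(Tt x t)^5) * hBx + (-12*(Tt x t)^4 * Q 1 x t) * hB
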